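/- Baer's theorem: a group G has the property that every normal embedding of G splits if and only if G has trivial center and every automorphism of G is inner (i.e., the conjugation homomorphism c_G : G → Aut(G) is an isomorphism). -/

import Mathlib

/-! Auxiliary: the discrete Heisenberg group, a group with a central element of
infinite order which is a commutator. -/

structure Heis where
  a : ℤ
  b : ℤ
  c : ℤ

namespace Heis

instance : Mul Heis := ⟨fun p q => ⟨p.a + q.a, p.b + q.b, p.c + q.c + p.a * q.b⟩⟩
instance : One Heis := ⟨⟨0, 0, 0⟩⟩
instance : Inv Heis := ⟨fun p => ⟨-p.a, -p.b, -p.c + p.a * p.b⟩⟩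

theorem mul_def (p q : Heis) :
    p * q = ⟨p.a + q.a, p.b + q.b, p.c + q.c + p.a * q.b⟩ := rfl

theorem one_def : (1 : Heis) = ⟨0, 0, 0⟩ := rfl

theorem inv_def (p : Heis) : p⁻¹ = ⟨-p.a, -p.b, -p.c + p.a * p.b⟩ := rfl

instance : Group Heis where
  mul_assoc p q r := by
    simp only [mul_def, mk.injEq]; refine ⟨by ring, by ring, by ring⟩
  one_mul p := by
    cases p
    simp only [one_def, mul_def, mk.injEq]
    refine ⟨by ring, by ring, by ring⟩
  mul_one p := by
    cases p
    simp only [one_def, mul_def, mk.injEq]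
    refine ⟨by ring, by ring, by ring⟩
  inv_mul_cancel p := by
    cases p
    simp only [inv_def, mul_def, one_def, mk.injEq]
    refine ⟨by ring, by ring, by ring⟩

/-- The central element. -/
def Z : Heis := ⟨0, 0, 1⟩
def X : Heis := ⟨1, 0, 0⟩
def Y : Heis := ⟨0, 1, 0⟩

theorem Z_comm (p : Heis) : p * Z = Z * p := by
  simp only [Z, mul_def, mk.injEq]; exact ⟨by ring, by ring, by ring⟩

theorem Z_commutator : X * Y * X⁻¹ * Y⁻¹ = Z := by
  simp only [X, Y, Z, mul_def, inv_def, mk.injEq]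
  norm_num

theorem Z_pow (n : ℕ) : (Z : Heis) ^ n = ⟨0, 0, (n : ℤ)⟩ := by
  induction n with
  | zero => rfl
  | succ k ih =>
    rw [pow_succ, ih]
    simp only [Z, mul_def, mk.injEq]
    push_cast
    exact ⟨by simp, by simp, by ring⟩

theorem Z_zpow (n : ℤ) : (Z : Heis) ^ n = ⟨0, 0, n⟩ := by
  cases n with
  | ofNat k => simpa using Z_pow k
  | negSucc k =>
    rw [zpow_negSucc, Z_pow]
    simp only [inv_def, Z, mk.injEq, Int.negSucc_eq]
    push_cast
    exact ⟨by simp, by simp, by ring⟩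

theorem Z_zpow_eq_one {n : ℤ} (h : (Z : Heis) ^ n = 1) : n = 0 := by
  rw [Z_zpow, one_def, mk.injEq] at h
  exact h.2.2

end Heis

/-- Baer's theorem: a group `G` has the property that every normal embedding of
`G` splits if and only if `G` has trivial center and every automorphism of `G`
is inner, i.e. the conjugation homomorphism `c_G : G → Aut G` is an isomorphism. -/
theorem stmt_7 (G : Type) [Group G] :
    (∀ (Y : Type) [Group Y] (i : G →* Y), Function.Injective i →
        (MonoidHom.range i).Normal →
        ∃ r : Y →* G, r.comp i = MonoidHom.id G) ↔
    (Subgroup.center G = ⊥ ∧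
      Function.Bijective (MulAut.conj : G →* MulAut G)) := by
  constructor
  · intro h
    -- First: the center is trivial.
    have hcent : Subgroup.center G = ⊥ := by
      rw [eq_bot_iff]
      intro a ha
      simp only [Subgroup.mem_bot]
      -- the amalgam (G × Heis) / ⟨(a⁻¹, Z)⟩
      set w : G × Heis := (a⁻¹, Heis.Z) with hw
      have hwc : ∀ p : G × Heis, p * w = w * p := by
        intro p
        have h1 : p.1 * a⁻¹ = a⁻¹ * p.1 :=
          (Subgroup.mem_center_iff.mp (inv_mem ha)) p.1
        have h2 : p.2 * Heis.Z = Heis.Z * p.2 := Heis.Z_comm p.2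
        exact Prod.ext h1 h2
      set N : Subgroup (G × Heis) := Subgroup.zpowers w with hN
      haveI hNn : N.Normal := by
        constructor
        rintro n ⟨k, rfl⟩ g
        have hc : Commute g (w ^ k) := Commute.zpow_right (hwc g) k
        show g * w ^ k * g⁻¹ ∈ N
        rw [hc.eq, mul_assoc, mul_inv_cancel, mul_one]
        exact ⟨k, rfl⟩
      set i : G →* (G × Heis) ⧸ N :=
        (QuotientGroup.mk' N).comp (MonoidHom.inl G Heis) with hi
      have hinj : Function.Injective i := by
        rw [← MonoidHom.ker_eq_bot_iff, eq_bot_iff]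
        intro g hg
        simp only [MonoidHom.mem_ker, hi, MonoidHom.comp_apply, MonoidHom.inl_apply,
          QuotientGroup.mk'_apply] at hg
        rw [QuotientGroup.eq_one_iff] at hg
        obtain ⟨k, hk⟩ := hg
        replace hk : w ^ k = (g, 1) := hk
        have hk2 : Heis.Z ^ k = 1 := by
          have h2 := map_zpow (MonoidHom.snd G Heis) w k
          rw [hk] at h2
          simpa [hw] using h2.symm
        have hk0 : k = 0 := Heis.Z_zpow_eq_one hk2
        have hk1 := map_zpow (MonoidHom.fst G Heis) w k
        rw [hk, hk0] at hk1
        simp only [zpow_zero] at hk1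
        have hg1 : g = 1 := by simpa using hk1
        simp [hg1]
      have hrange : (MonoidHom.range i).Normal := by
        constructor
        intro n hn y
        obtain ⟨g, rfl⟩ := hn
        induction y using QuotientGroup.induction_on with
        | H p =>
          refine ⟨p.1 * g * p.1⁻¹, ?_⟩
          simp only [hi, MonoidHom.comp_apply, MonoidHom.inl_apply, QuotientGroup.mk'_apply]
          rw [← QuotientGroup.mk_inv, ← QuotientGroup.mk_mul, ← QuotientGroup.mk_mul]
          congr 1
          rw [Prod.ext_iff]
          simp
      obtain ⟨r, hr⟩ := h _ i hinj hrange
      have hrapp : ∀ g : G, r (i g) = g := fun g => congrArg (· g) (congrArg DFunLike.coe hr)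
      set u : G := r (QuotientGroup.mk (1, Heis.X)) with hu
      set v : G := r (QuotientGroup.mk (1, Heis.Y)) with hv
      -- u and v commute (both are central in the image, but we only need they commute).
      have hmkmul : ∀ p q : Heis, (QuotientGroup.mk (1, p * q) : (G × Heis) ⧸ N)
          = QuotientGroup.mk (1, p) * QuotientGroup.mk (1, q) := by
        intro p q
        rw [← QuotientGroup.mk_mul]
        congr 1
        rw [Prod.ext_iff]; simp
      have hainZ : (QuotientGroup.mk (a, (1:Heis)) : (G × Heis) ⧸ N)
          = QuotientGroup.mk (1, Heis.Z) := by
        rw [QuotientGroup.eq]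
        rw [Subgroup.mem_zpowers_iff]
        refine ⟨1, ?_⟩
        rw [zpow_one, hw]
        exact Prod.ext (by simp) (by simp)
      have ha2 : a = r (QuotientGroup.mk (1, Heis.Z)) := by
        rw [← hainZ]
        exact (hrapp a).symm
      -- central elements: u commutes with all of G
      have hcomm : ∀ p : Heis, ∀ g : G, r (QuotientGroup.mk (1, p)) * g
          = g * r (QuotientGroup.mk (1, p)) := by
        intro p g
        have e1 : (QuotientGroup.mk (1, p) : (G × Heis) ⧸ N) * i g
            = i g * QuotientGroup.mk (1, p) := by
          simp only [hi, MonoidHom.comp_apply, MonoidHom.inl_apply, QuotientGroup.mk'_apply]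
          rw [← QuotientGroup.mk_mul, ← QuotientGroup.mk_mul]
          congr 1
          rw [Prod.ext_iff]; simp
        calc r (QuotientGroup.mk (1, p)) * g
            = r (QuotientGroup.mk (1, p) * i g) := by rw [map_mul, hrapp]
          _ = r (i g * QuotientGroup.mk (1, p)) := by rw [e1]
          _ = g * r (QuotientGroup.mk (1, p)) := by rw [map_mul, hrapp]
      have huv : u * v = v * u := hcomm Heis.X v
      have : a = u * v * u⁻¹ * v⁻¹ := by
        rw [ha2, ← Heis.Z_commutator]
        have hXinv : (QuotientGroup.mk (1, Heis.X⁻¹) : (G × Heis) ⧸ N)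
            = (QuotientGroup.mk (1, Heis.X))⁻¹ := by
          rw [← QuotientGroup.mk_inv]; congr 1; rw [Prod.ext_iff]; simp
        have hYinv : (QuotientGroup.mk (1, Heis.Y⁻¹) : (G × Heis) ⧸ N)
            = (QuotientGroup.mk (1, Heis.Y))⁻¹ := by
          rw [← QuotientGroup.mk_inv]; congr 1; rw [Prod.ext_iff]; simp
        rw [hmkmul, hmkmul, hmkmul, hXinv, hYinv, map_mul, map_mul, map_mul,
          map_inv, map_inv, ← hu, ← hv]
      rw [this, huv]
      group
    refine ⟨hcent, ?_, ?_⟩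
    · -- injectivity of conj
      rw [injective_iff_map_eq_one]
      intro g hg
      have : g ∈ Subgroup.center G := by
        rw [Subgroup.mem_center_iff]
        intro x
        have h1 : g * x * g⁻¹ = x := by
          have := congrArg (fun (f : MulAut G) => f x) hg
          simpa using this
        calc x * g = (g * x * g⁻¹) * g := by rw [h1]
          _ = g * x := by group
      rw [hcent] at this
      simpa using this
    · -- surjectivity of conj, via the holomorph
      intro φ
      set Y := G ⋊[MonoidHom.id (MulAut G)] MulAut G with hY
      have hrange : (MonoidHom.range (SemidirectProduct.inl : G →* Y)).Normal := by
        rw [SemidirectProduct.range_inl_eq_ker_rightHom]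
        infer_instance
      obtain ⟨r, hr⟩ := h Y SemidirectProduct.inl SemidirectProduct.inl_injective hrange
      have hrapp : ∀ g : G, r (SemidirectProduct.inl g) = g :=
        fun g => congrArg (· g) (congrArg DFunLike.coe hr)
      refine ⟨r (SemidirectProduct.inr φ), ?_⟩
      ext x
      have key : (SemidirectProduct.inl (φ x) : Y)
          = SemidirectProduct.inr φ * SemidirectProduct.inl x * (SemidirectProduct.inr φ)⁻¹ := by
        simpa using (SemidirectProduct.inl_aut (φ := MonoidHom.id (MulAut G)) φ x)
      calc MulAut.conj (r (SemidirectProduct.inr φ)) x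
          = r (SemidirectProduct.inr φ) * x * (r (SemidirectProduct.inr φ))⁻¹ := rfl
        _ = r (SemidirectProduct.inr φ * SemidirectProduct.inl x
              * (SemidirectProduct.inr φ)⁻¹) := by
            rw [map_mul, map_mul, map_inv, hrapp]
        _ = r (SemidirectProduct.inl (φ x)) := by rw [← key]
        _ = φ x := hrapp _
  · rintro ⟨-, hbij⟩
    intro Y _ i hinj hnorm
    haveI := hnorm
    set e : G ≃* MulAut G := MulEquiv.ofBijective MulAut.conj hbij with he
    set e₁ : G ≃* i.range := MonoidHom.ofInjective hinj with he₁
    set α : Y →* MulAut G :=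
      (MulAut.congr e₁.symm).toMonoidHom.comp MulAut.conjNormal with hα
    refine ⟨e.symm.toMonoidHom.comp α, ?_⟩
    ext g
    simp only [MonoidHom.comp_apply, MonoidHom.id_apply, MulEquiv.coe_toMonoidHom]
    have key : α (i g) = MulAut.conj g := by
      ext x
      simp only [hα, MonoidHom.comp_apply, MulEquiv.coe_toMonoidHom, MulAut.congr_apply,
        MulEquiv.trans_apply, MulEquiv.symm_symm, MulAut.conj_apply]
      have h1 : e₁ x = ⟨i x, MonoidHom.mem_range.mpr ⟨x, rfl⟩⟩ := by
        rw [he₁]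
        exact Subtype.ext (MonoidHom.ofInjective_apply hinj)
      rw [h1]
      have h2 : (MulAut.conjNormal (i g)) (⟨i x, MonoidHom.mem_range.mpr ⟨x, rfl⟩⟩ : i.range)
          = ⟨i (g * x * g⁻¹), MonoidHom.mem_range.mpr ⟨g * x * g⁻¹, rfl⟩⟩ := by
        refine Subtype.ext ?_
        rw [MulAut.conjNormal_apply]
        simp [map_mul]
      rw [h2]
      apply hinj
      have := MonoidHom.apply_ofInjective_symm hinj
        (⟨i (g * x * g⁻¹), MonoidHom.mem_range.mpr ⟨g * x * g⁻¹, rfl⟩⟩ : i.range)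
      rw [← he₁] at this
      rw [this]
    rw [key]
    have : e g = MulAut.conj g := rfl
    rw [← this, MulEquiv.symm_apply_apply]
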